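/- arXiv:2010.14179 — 2 statements merged into one kernel-verified Lean document; each statement's English description precedes it below -/
import Mathlib

section
/- Let M ≥ 1 be an integer, let Ω₁, …, Ω_{M+1} be real numbers with Ω_{M+1} ≠ 0. Then for all t ≥ 0, G_{M+1}(t) = (e^{iΩ_{M+1}t}/(iΩ_{M+1})) · G_M(t) − ∫₀ᵗ (e^{i(Ω_{M+1}+Ω_M)τ}/(iΩ_{M+1})) · G_{M−1}(τ) dτ, where G_{M−1}, G_M, G_{M+1} are formed from the frequency lists (Ω₁,…,Ω_{M−1}), (Ω₁,…,Ω_M), (Ω₁,…,Ω_{M+1}) respectively. -/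
open MeasureTheory

/-- The ordered simplex. -/
def SS (k : ℕ) (t : ℝ) : Set (Fin k → ℝ) :=
  {s | (∀ j, s j ∈ Set.Icc 0 t) ∧ ∀ i j : Fin k, i ≤ j → s i ≤ s j}

lemma measurableSet_SS (k : ℕ) (t : ℝ) : MeasurableSet (SS k t) := by
  have h1 : MeasurableSet {s : Fin k → ℝ | ∀ j, s j ∈ Set.Icc 0 t} := by
    rw [Set.setOf_forall]
    exact MeasurableSet.iInter fun j => (measurable_pi_apply j) measurableSet_Icc
  have h2 : MeasurableSet {s : Fin k → ℝ | ∀ i j : Fin k, i ≤ j → s i ≤ s j} := by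
    rw [Set.setOf_forall]
    refine MeasurableSet.iInter fun i => ?_
    rw [Set.setOf_forall]
    refine MeasurableSet.iInter fun j => ?_
    by_cases hij : i ≤ j
    · simp only [hij, forall_true_left]
      exact measurableSet_le (measurable_pi_apply i) (measurable_pi_apply j)
    · simp [hij]
  exact h1.inter h2

lemma volume_SS_lt_top (k : ℕ) (t : ℝ) : volume (SS k t) < ⊤ := by
  have hsub : SS k t ⊆ Set.univ.pi fun _ : Fin k => Set.Icc 0 t := by
    intro s hs j _
    exact hs.1 j
  refine lt_of_le_of_lt (measure_mono hsub) ?_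
  rw [volume_pi_pi]
  simp only [Real.volume_Icc]
  exact ENNReal.prod_lt_top fun _ _ => ENNReal.ofReal_lt_top

lemma snoc_mem_SS_iff {k : ℕ} {t x : ℝ} {y : Fin k → ℝ} :
    Fin.snoc y x ∈ SS (k + 1) t ↔ x ∈ Set.Icc 0 t ∧ y ∈ SS k x := by
  constructor
  · rintro ⟨h1, h2⟩
    have hx := h1 (Fin.last k)
    rw [Fin.snoc_last] at hx
    refine ⟨hx, fun j => ?_, fun i j hij => ?_⟩
    · have h0 := (h1 j.castSucc).1
      have hle := h2 j.castSucc (Fin.last k) (Fin.le_last _)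
      rw [Fin.snoc_castSucc] at h0
      rw [Fin.snoc_castSucc, Fin.snoc_last] at hle
      exact ⟨h0, hle⟩
    · have := h2 i.castSucc j.castSucc (by simpa using hij)
      simpa using this
  · rintro ⟨hx, h1, h2⟩
    constructor
    · intro j
      rcases Fin.eq_castSucc_or_eq_last j with ⟨j', rfl⟩ | rfl
      · rw [Fin.snoc_castSucc]
        exact ⟨(h1 j').1, le_trans (h1 j').2 hx.2⟩
      · rw [Fin.snoc_last]; exact hx
    · intro i j hij
      rcases Fin.eq_castSucc_or_eq_last j with ⟨j', rfl⟩ | rfl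
      · rcases Fin.eq_castSucc_or_eq_last i with ⟨i', rfl⟩ | rfl
        · rw [Fin.snoc_castSucc, Fin.snoc_castSucc]
          exact h2 i' j' (by simpa using hij)
        · exact absurd hij (not_le.2 (Fin.castSucc_lt_last j'))
      · rw [Fin.snoc_last]
        rcases Fin.eq_castSucc_or_eq_last i with ⟨i', rfl⟩ | rfl
        · rw [Fin.snoc_castSucc]
          exact (h1 i').2
        · rw [Fin.snoc_last]

/-- `G M Ω t = ∫_{0 ≤ t₁ ≤ ⋯ ≤ t_M ≤ t} ∏_{j=1}^M e^{i Ω_j t_j} dt₁⋯dt_M`,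
with the convention `G 0 Ω t = 1`. -/
noncomputable def G (M : ℕ) (Ω : ℕ → ℝ) (t : ℝ) : ℂ :=
  ∫ s in {s : Fin M → ℝ | (∀ j, s j ∈ Set.Icc 0 t) ∧ ∀ i j : Fin M, i ≤ j → s i ≤ s j},
    ∏ j : Fin M, Complex.exp (Complex.I * (Ω (j.val + 1)) * (s j))

lemma G_eq_setIntegral (M : ℕ) (Ω : ℕ → ℝ) (t : ℝ) :
    G M Ω t = ∫ s in SS M t, ∏ j : Fin M, Complex.exp (Complex.I * (Ω (j.val + 1)) * (s j)) :=
  rfl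

lemma norm_prod_exp (k : ℕ) (Ω : ℕ → ℝ) (s : Fin k → ℝ) :
    ‖∏ j : Fin k, Complex.exp (Complex.I * (Ω (j.val + 1)) * (s j))‖ = 1 := by
  rw [norm_prod]
  refine Finset.prod_eq_one fun j _ => ?_
  rw [Complex.norm_exp]
  simp [Complex.mul_re]

lemma integrable_indicator_SS (k : ℕ) (Ω : ℕ → ℝ) (t : ℝ) :
    Integrable ((SS k t).indicator
      (fun s => ∏ j : Fin k, Complex.exp (Complex.I * (Ω (j.val + 1)) * (s j)))) volume := by
  have hcont : Continuous
      (fun s : Fin k → ℝ => ∏ j : Fin k, Complex.exp (Complex.I * (Ω (j.val + 1)) * (s j))) := by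
    refine continuous_finset_prod _ fun j _ => Complex.continuous_exp.comp ?_
    exact continuous_const.mul (Complex.continuous_ofReal.comp (continuous_apply j))
  have hio : IntegrableOn
      (fun s : Fin k → ℝ => ∏ j : Fin k, Complex.exp (Complex.I * (Ω (j.val + 1)) * (s j)))
      (SS k t) volume := by
    refine Integrable.mono' (g := fun _ => (1:ℝ))
      (integrableOn_const (volume_SS_lt_top k t).ne)
      hcont.aestronglyMeasurable.restrict ?_
    filter_upwards with s
    rw [norm_prod_exp]
  exact hio.integrable_indicator (measurableSet_SS k t)

lemma G_succ (k : ℕ) (Ω : ℕ → ℝ) (t : ℝ) :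
    G (k + 1) Ω t =
      ∫ x in Set.Icc (0:ℝ) t, Complex.exp (Complex.I * (Ω (k + 1)) * x) * G k Ω x := by
  classical
  set f : (Fin (k+1) → ℝ) → ℂ :=
    fun s => ∏ j : Fin (k+1), Complex.exp (Complex.I * (Ω (j.val + 1)) * (s j)) with hf
  set fk : (Fin k → ℝ) → ℂ :=
    fun y => ∏ j : Fin k, Complex.exp (Complex.I * (Ω (j.val + 1)) * (y j)) with hfk
  have hf_snoc : ∀ (x : ℝ) (y : Fin k → ℝ),
      f (Fin.snoc y x) = Complex.exp (Complex.I * (Ω (k + 1)) * x) * fk y := by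
    intro x y
    rw [hf]
    simp only [Fin.prod_univ_castSucc, Fin.snoc_castSucc, Fin.snoc_last, Fin.val_last,
      Fin.coe_castSucc]
    rw [mul_comm]
  set e := MeasurableEquiv.piFinSuccAbove (fun _ : Fin (k+1) => ℝ) (Fin.last k) with he
  have hmp := volume_preserving_piFinSuccAbove (fun _ : Fin (k+1) => ℝ) (Fin.last k)
  have hsymm : ∀ p : ℝ × (Fin k → ℝ), e.symm p = Fin.snoc p.2 p.1 := by
    intro p
    simp [he, MeasurableEquiv.piFinSuccAbove_symm_apply, Fin.insertNthEquiv,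
      Fin.insertNth_last']
  have step1 : G (k+1) Ω t = ∫ s, (SS (k+1) t).indicator f s := by
    rw [G_eq_setIntegral, integral_indicator (measurableSet_SS _ _)]
  have step2 : (∫ s, (SS (k+1) t).indicator f s)
      = ∫ p : ℝ × (Fin k → ℝ), (SS (k+1) t).indicator f (e.symm p) := by
    rw [(hmp.symm e).integral_comp e.symm.measurableEmbedding]
  have hint : Integrable (fun p : ℝ × (Fin k → ℝ) => (SS (k+1) t).indicator f (e.symm p))
      (volume.prod volume) := by
    have : Integrable ((SS (k+1) t).indicator f) volume := integrable_indicator_SS (k+1) Ω t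
    have h2 := ((hmp.symm e).integrable_comp_emb e.symm.measurableEmbedding
      (g := (SS (k+1) t).indicator f)).2 this
    have hvol : (volume : Measure (ℝ × (Fin k → ℝ))) = volume.prod volume := Measure.volume_eq_prod _ _
    rw [← hvol]
    exact h2
  have step3 : (∫ p : ℝ × (Fin k → ℝ), (SS (k+1) t).indicator f (e.symm p))
      = ∫ x : ℝ, ∫ y : Fin k → ℝ, (SS (k+1) t).indicator f (e.symm (x, y)) := by
    have hvol : (volume : Measure (ℝ × (Fin k → ℝ))) = volume.prod volume := Measure.volume_eq_prod _ _
    rw [hvol, integral_prod _ hint]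
  have inner : ∀ x : ℝ,
      (∫ y : Fin k → ℝ, (SS (k+1) t).indicator f (e.symm (x, y)))
        = (Set.Icc (0:ℝ) t).indicator
            (fun x => Complex.exp (Complex.I * (Ω (k + 1)) * x) * G k Ω x) x := by
    intro x
    by_cases hx : x ∈ Set.Icc (0:ℝ) t
    · rw [Set.indicator_of_mem hx]
      have : ∀ y : Fin k → ℝ, (SS (k+1) t).indicator f (e.symm (x, y))
          = Complex.exp (Complex.I * (Ω (k + 1)) * x) * (SS k x).indicator fk y := by
        intro y
        rw [hsymm]
        by_cases hy : y ∈ SS k x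
        · rw [Set.indicator_of_mem (snoc_mem_SS_iff.2 ⟨hx, hy⟩), Set.indicator_of_mem hy,
            hf_snoc]
        · rw [Set.indicator_of_notMem (fun h => hy (snoc_mem_SS_iff.1 h).2),
            Set.indicator_of_notMem hy, mul_zero]
      simp_rw [this]
      rw [integral_const_mul, integral_indicator (measurableSet_SS k x),
        ← G_eq_setIntegral]
    · rw [Set.indicator_of_notMem hx]
      have : ∀ y : Fin k → ℝ, (SS (k+1) t).indicator f (e.symm (x, y)) = 0 := by
        intro y
        rw [hsymm]
        exact Set.indicator_of_notMem (fun h => hx (snoc_mem_SS_iff.1 h).1) f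
      simp [this]
  rw [step1, step2, step3]
  simp_rw [inner]
  rw [integral_indicator measurableSet_Icc]

noncomputable def Fn (Ω : ℕ → ℝ) : ℕ → ℝ → ℂ
  | 0 => fun _ => 1
  | (k+1) => fun t => ∫ τ in (0:ℝ)..t, Complex.exp (Complex.I * (Ω (k + 1)) * τ) * Fn Ω k τ

lemma contIntegrand {Ω : ℕ → ℝ} {k : ℕ} (hFk : Continuous (Fn Ω k)) :
    Continuous (fun τ : ℝ => Complex.exp (Complex.I * (Ω (k + 1)) * τ) * Fn Ω k τ) :=
  (Complex.continuous_exp.comp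
    (continuous_const.mul Complex.continuous_ofReal)).mul hFk

lemma contFn (Ω : ℕ → ℝ) : ∀ k, Continuous (Fn Ω k) := by
  intro k
  induction k with
  | zero => exact continuous_const
  | succ k ih =>
    have hg := contIntegrand (Ω := Ω) ih
    show Continuous fun t => ∫ τ in (0:ℝ)..t, Complex.exp (Complex.I * (Ω (k + 1)) * τ) * Fn Ω k τ
    exact intervalIntegral.continuous_primitive (fun a b => hg.intervalIntegrable a b) 0

lemma hasDerivFn (Ω : ℕ → ℝ) (k : ℕ) (τ : ℝ) :
    HasDerivAt (Fn Ω (k+1)) (Complex.exp (Complex.I * (Ω (k + 1)) * τ) * Fn Ω k τ) τ := by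
  have hg := contIntegrand (Ω := Ω) (contFn Ω k)
  exact intervalIntegral.integral_hasDerivAt_right (hg.intervalIntegrable _ _)
    (hg.stronglyMeasurableAtFilter _ _) hg.continuousAt

lemma G_zero (Ω : ℕ → ℝ) (t : ℝ) : G 0 Ω t = 1 := by
  have hset : {s : Fin 0 → ℝ | (∀ j, s j ∈ Set.Icc 0 t) ∧ ∀ i j : Fin 0, i ≤ j → s i ≤ s j}
      = Set.univ := by
    ext s
    simp [Fin.elim0]
  rw [G, hset]
  simp only [Finset.univ_eq_empty, Finset.prod_empty]
  rw [Measure.restrict_univ, integral_const]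
  have : (volume : Measure (Fin 0 → ℝ)) Set.univ = 1 := by
    rw [volume_pi, Measure.pi_univ]
    simp
  rw [measureReal_def, this]
  simp

lemma G_eq_Fn (Ω : ℕ → ℝ) : ∀ k (t : ℝ), 0 ≤ t → G k Ω t = Fn Ω k t := by
  intro k
  induction k with
  | zero => intro t _; rw [G_zero]; rfl
  | succ k ih =>
    intro t ht
    rw [G_succ]
    show _ = ∫ τ in (0:ℝ)..t, Complex.exp (Complex.I * (Ω (k + 1)) * τ) * Fn Ω k τ
    rw [intervalIntegral.integral_of_le ht, ← integral_Icc_eq_integral_Ioc]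
    refine setIntegral_congr_fun measurableSet_Icc fun τ hτ => ?_
    rw [ih τ hτ.1]

theorem stmt_1 (M : ℕ) (hM : 1 ≤ M) (Ω : ℕ → ℝ) (hΩ : Ω (M + 1) ≠ 0)
    (t : ℝ) (ht : 0 ≤ t) :
    G (M + 1) Ω t =
      Complex.exp (Complex.I * Ω (M + 1) * t) / (Complex.I * Ω (M + 1)) * G M Ω t -
        ∫ τ in (0:ℝ)..t,
          Complex.exp (Complex.I * (Ω (M + 1) + Ω M) * τ) / (Complex.I * Ω (M + 1)) *
            G (M - 1) Ω τ := by
  obtain ⟨m, rfl⟩ : ∃ m, M = m + 1 := ⟨M - 1, (Nat.succ_pred_eq_of_pos hM).symm⟩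
  simp only [Nat.add_sub_cancel]
  set c : ℂ := Complex.I * (Ω (m + 1 + 1) : ℂ) with hc
  have hc0 : c ≠ 0 := mul_ne_zero Complex.I_ne_zero (Complex.ofReal_ne_zero.2 hΩ)
  have hv : ∀ τ : ℝ, HasDerivAt (fun τ : ℝ => Complex.exp (c * τ) / c)
      (Complex.exp (c * τ)) τ := by
    intro τ
    have h1 : HasDerivAt (fun τ : ℝ => (τ : ℂ)) 1 τ := by
      exact Complex.ofRealCLM.hasDerivAt (x := τ)
    have h3 := ((h1.const_mul c).cexp).div_const c
    simpa [mul_one, mul_div_cancel_right₀ _ hc0] using h3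
  have key := intervalIntegral.integral_mul_deriv_eq_deriv_mul
    (u := Fn Ω (m+1)) (u' := fun τ => Complex.exp (Complex.I * (Ω (m + 1)) * τ) * Fn Ω m τ)
    (v := fun τ : ℝ => Complex.exp (c * τ) / c) (v' := fun τ => Complex.exp (c * τ))
    (a := 0) (b := t)
    (fun x _ => hasDerivFn Ω m x) (fun x _ => hv x)
    ((contIntegrand (Ω := Ω) (contFn Ω m)).intervalIntegrable _ _)
    ((Complex.continuous_exp.comp
      (continuous_const.mul Complex.continuous_ofReal)).intervalIntegrable _ _)
  have h0 : Fn Ω (m+1) 0 = 0 := by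
    show (∫ τ in (0:ℝ)..(0:ℝ),
      Complex.exp (Complex.I * (Ω (m + 1)) * τ) * Fn Ω m τ) = 0
    exact intervalIntegral.integral_same
  have hintcong : (∫ τ in (0:ℝ)..t,
        (Complex.exp (Complex.I * (Ω (m + 1)) * τ) * Fn Ω m τ) * (Complex.exp (c * τ) / c))
      = ∫ τ in (0:ℝ)..t,
          Complex.exp (Complex.I * ((Ω (m + 1 + 1) : ℂ) + (Ω (m + 1) : ℂ)) * τ) / c
            * G m Ω τ := by
    refine intervalIntegral.integral_congr fun τ hτ => ?_
    rw [Set.uIcc_of_le ht] at hτ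
    rw [G_eq_Fn Ω m τ hτ.1]
    have hexp : Complex.I * ((Ω (m + 1 + 1) : ℂ) + (Ω (m + 1) : ℂ)) * (τ : ℂ)
        = c * τ + Complex.I * (Ω (m + 1)) * τ := by
      rw [hc]; ring
    rw [hexp, Complex.exp_add]
    ring
  rw [G_eq_Fn Ω _ t ht]
  show (∫ τ in (0:ℝ)..t, Complex.exp (c * τ) * Fn Ω (m+1) τ) = _
  rw [show (∫ τ in (0:ℝ)..t, Complex.exp (c * τ) * Fn Ω (m+1) τ)
      = ∫ τ in (0:ℝ)..t, Fn Ω (m+1) τ * Complex.exp (c * τ) from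
      intervalIntegral.integral_congr fun τ _ => mul_comm _ _,
    key, h0, zero_mul, sub_zero, hintcong, ← G_eq_Fn Ω (m+1) t ht]
  ring
end

section
/- Let E be a normed ring (so ‖xy‖ ≤ ‖x‖·‖y‖), let q : ℤ → (0,∞), and let l ≥ l₁ be real numbers such that S := ∑_{α ∈ A} q^{−(l−l₁)α} < ∞. Let φ, ψ : A → E satisfy ‖φ‖_{−1,−l₁} < ∞ and ‖ψ‖_{−1,−l} < ∞. Then the Wick product φ ⋄ ψ satisfies ‖φ ⋄ ψ‖²_{−1,−l} ≤ S · ‖φ‖²_{−1,−l₁} · ‖ψ‖²_{−1,−l}. -/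
open scoped BigOperators ENNReal

/-- `α! = ∏_k α(k)!` as a real number. -/
noncomputable def factA (α : ℤ →₀ ℕ) : ℝ :=
  ∏ k ∈ α.support, (Nat.factorial (α k) : ℝ)

/-- `q^{rα} = ∏_k q(k)^{r·α(k)}`. -/
noncomputable def qpow (q : ℤ → ℝ) (r : ℝ) (α : ℤ →₀ ℕ) : ℝ :=
  ∏ k ∈ α.support, q k ^ (r * (α k : ℝ))

/-- The Wick product `(φ ⋄ ψ)_α = ∑_{α₁+α₂=α} √(α!/(α₁!·α₂!)) φ_{α₁} ψ_{α₂}`. -/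
noncomputable def wick {E : Type*} [NormedRing E] [NormedSpace ℝ E]
    (φ ψ : (ℤ →₀ ℕ) → E) (α : ℤ →₀ ℕ) : E :=
  ∑ p ∈ Finset.HasAntidiagonal.antidiagonal α,
    Real.sqrt (factA α / (factA p.1 * factA p.2)) • (φ p.1 * ψ p.2)

/-- `‖φ‖²_{-1,-l} = ∑_α (q^{-lα}/α!) ‖φ_α‖²`, valued in `ℝ≥0∞`. -/
noncomputable def Knorm {E : Type*} [NormedRing E] (q : ℤ → ℝ) (l : ℝ)
    (φ : (ℤ →₀ ℕ) → E) : ℝ≥0∞ :=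
  ∑' α : ℤ →₀ ℕ, ENNReal.ofReal (qpow q (-l) α / factA α * ‖φ α‖ ^ 2)

lemma factA_pos (α : ℤ →₀ ℕ) : 0 < factA α :=
  Finset.prod_pos fun k _ => by exact_mod_cast (α k).factorial_pos

lemma qpow_pos {q : ℤ → ℝ} (hq : ∀ k, 0 < q k) (r : ℝ) (α : ℤ →₀ ℕ) :
    0 < qpow q r α :=
  Finset.prod_pos fun k _ => Real.rpow_pos_of_pos (hq k) _

lemma qpow_eq_prod {q : ℤ → ℝ} (r : ℝ) (α : ℤ →₀ ℕ) {s : Finset ℤ}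
    (hs : α.support ⊆ s) : qpow q r α = ∏ k ∈ s, q k ^ (r * (α k : ℝ)) := by
  refine Finset.prod_subset hs fun k _ hk => ?_
  have : α k = 0 := Finsupp.notMem_support_iff.mp hk
  simp [this]

lemma qpow_add {q : ℤ → ℝ} (hq : ∀ k, 0 < q k) (r : ℝ) (α β : ℤ →₀ ℕ) :
    qpow q r (α + β) = qpow q r α * qpow q r β := by
  rw [qpow_eq_prod r (α + β) (s := α.support ∪ β.support) Finsupp.support_add,
    qpow_eq_prod r α (s := α.support ∪ β.support) Finset.subset_union_left,
    qpow_eq_prod r β (s := α.support ∪ β.support) Finset.subset_union_right,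
    ← Finset.prod_mul_distrib]
  refine Finset.prod_congr rfl fun k _ => ?_
  rw [← Real.rpow_add (hq k)]
  congr 1
  rw [Finsupp.add_apply]
  push_cast
  ring

lemma qpow_split {q : ℤ → ℝ} (hq : ∀ k, 0 < q k) (r s : ℝ) (α : ℤ →₀ ℕ) :
    qpow q (r + s) α = qpow q r α * qpow q s α := by
  rw [qpow, qpow, qpow, ← Finset.prod_mul_distrib]
  refine Finset.prod_congr rfl fun k _ => ?_
  rw [← Real.rpow_add (hq k)]
  congr 1
  ring

theorem stmt_14 {E : Type*} [NormedRing E] [NormedSpace ℝ E]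
    (q : ℤ → ℝ) (hq : ∀ k, 0 < q k) (l l₁ : ℝ) (hl : l₁ ≤ l)
    (hS : (∑' α : ℤ →₀ ℕ, ENNReal.ofReal (qpow q (-(l - l₁)) α)) < ⊤)
    (φ ψ : (ℤ →₀ ℕ) → E)
    (hφ : Knorm q l₁ φ < ⊤) (hψ : Knorm q l ψ < ⊤) :
    Knorm q l (wick φ ψ) ≤
      (∑' α : ℤ →₀ ℕ, ENNReal.ofReal (qpow q (-(l - l₁)) α)) *
        Knorm q l₁ φ * Knorm q l ψ := by
  classical
  set S : ℝ≥0∞ := ∑' α : ℤ →₀ ℕ, ENNReal.ofReal (qpow q (-(l - l₁)) α) with hSdef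
  set F : (ℤ →₀ ℕ) → ℝ≥0∞ :=
    fun α => ENNReal.ofReal (qpow q (-l₁) α / factA α * ‖φ α‖ ^ 2) with hF
  set G : (ℤ →₀ ℕ) → ℝ≥0∞ :=
    fun α => ENNReal.ofReal (qpow q (-l) α / factA α * ‖ψ α‖ ^ 2) with hG
  -- Step 1: pointwise bound
  have key : ∀ α : ℤ →₀ ℕ,
      ENNReal.ofReal (qpow q (-l) α / factA α * ‖wick φ ψ α‖ ^ 2) ≤
        S * ∑ p ∈ Finset.HasAntidiagonal.antidiagonal α, F p.1 * G p.2 := by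
    intro α
    set c : (ℤ →₀ ℕ) × (ℤ →₀ ℕ) → ℝ := fun p => Real.sqrt (qpow q (-(l - l₁)) p.1) with hc
    set d : (ℤ →₀ ℕ) × (ℤ →₀ ℕ) → ℝ := fun p =>
      (Real.sqrt (qpow q (-l₁) p.1 / factA p.1) * ‖φ p.1‖) *
        (Real.sqrt (qpow q (-l) p.2 / factA p.2) * ‖ψ p.2‖) with hd
    have hfa := factA_pos α
    have hqa := qpow_pos hq (-l) α
    have hX : (0:ℝ) ≤ qpow q (-l) α / factA α := (div_pos hqa hfa).le
    have hterm : ∀ p ∈ Finset.HasAntidiagonal.antidiagonal α,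
        Real.sqrt (qpow q (-l) α / factA α) *
          (Real.sqrt (factA α / (factA p.1 * factA p.2)) * (‖φ p.1‖ * ‖ψ p.2‖)) =
          c p * d p := by
      intro p hp
      have hpa : p.1 + p.2 = α := Finset.HasAntidiagonal.mem_antidiagonal.mp hp
      have hf1 := factA_pos p.1
      have hf2 := factA_pos p.2
      have hq1 := qpow_pos hq (-(l - l₁)) p.1
      have hq2 := qpow_pos hq (-l₁) p.1
      have hq3 := qpow_pos hq (-l) p.2
      have h1 : qpow q (-l) α =
          qpow q (-(l - l₁)) p.1 * qpow q (-l₁) p.1 * qpow q (-l) p.2 := by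
        rw [← hpa, qpow_add hq, ← qpow_split hq,
          show -(l - l₁) + -l₁ = -l from by ring]
      have e1 : qpow q (-l) α / factA α * (factA α / (factA p.1 * factA p.2)) =
          qpow q (-(l - l₁)) p.1 *
            (qpow q (-l₁) p.1 / factA p.1) * (qpow q (-l) p.2 / factA p.2) := by
        rw [h1]; field_simp
      have s1 : Real.sqrt (qpow q (-l) α / factA α) *
          Real.sqrt (factA α / (factA p.1 * factA p.2)) =
          Real.sqrt (qpow q (-l) α / factA α * (factA α / (factA p.1 * factA p.2))) :=
        (Real.sqrt_mul hX _).symm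
      have s2 : Real.sqrt (qpow q (-(l - l₁)) p.1 *
            (qpow q (-l₁) p.1 / factA p.1) * (qpow q (-l) p.2 / factA p.2)) =
          Real.sqrt (qpow q (-(l - l₁)) p.1) *
            Real.sqrt (qpow q (-l₁) p.1 / factA p.1) *
              Real.sqrt (qpow q (-l) p.2 / factA p.2) := by
        rw [Real.sqrt_mul (mul_nonneg hq1.le (div_nonneg hq2.le hf1.le)),
          Real.sqrt_mul hq1.le]
      calc Real.sqrt (qpow q (-l) α / factA α) *
            (Real.sqrt (factA α / (factA p.1 * factA p.2)) * (‖φ p.1‖ * ‖ψ p.2‖))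
          = (Real.sqrt (qpow q (-l) α / factA α) *
              Real.sqrt (factA α / (factA p.1 * factA p.2))) * (‖φ p.1‖ * ‖ψ p.2‖) := by
            ring
        _ = Real.sqrt (qpow q (-(l - l₁)) p.1 *
              (qpow q (-l₁) p.1 / factA p.1) * (qpow q (-l) p.2 / factA p.2)) *
              (‖φ p.1‖ * ‖ψ p.2‖) := by rw [s1, e1]
        _ = c p * d p := by rw [s2, hc, hd]; ring
    have hwick : Real.sqrt (qpow q (-l) α / factA α) * ‖wick φ ψ α‖ ≤
        ∑ p ∈ Finset.HasAntidiagonal.antidiagonal α, c p * d p := by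
      have h1 : ‖wick φ ψ α‖ ≤ ∑ p ∈ Finset.HasAntidiagonal.antidiagonal α,
          Real.sqrt (factA α / (factA p.1 * factA p.2)) * (‖φ p.1‖ * ‖ψ p.2‖) := by
        refine (norm_sum_le _ _).trans (Finset.sum_le_sum fun p hp => ?_)
        rw [norm_smul, Real.norm_eq_abs, abs_of_nonneg (Real.sqrt_nonneg _)]
        exact mul_le_mul_of_nonneg_left (norm_mul_le _ _) (Real.sqrt_nonneg _)
      calc Real.sqrt (qpow q (-l) α / factA α) * ‖wick φ ψ α‖
          ≤ Real.sqrt (qpow q (-l) α / factA α) * ∑ p ∈ Finset.HasAntidiagonal.antidiagonal α,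
              Real.sqrt (factA α / (factA p.1 * factA p.2)) * (‖φ p.1‖ * ‖ψ p.2‖) :=
            mul_le_mul_of_nonneg_left h1 (Real.sqrt_nonneg _)
        _ = ∑ p ∈ Finset.HasAntidiagonal.antidiagonal α, c p * d p := by
            rw [Finset.mul_sum]; exact Finset.sum_congr rfl hterm
    have hsq : qpow q (-l) α / factA α * ‖wick φ ψ α‖ ^ 2 ≤
        (∑ p ∈ Finset.HasAntidiagonal.antidiagonal α, c p ^ 2) *
          ∑ p ∈ Finset.HasAntidiagonal.antidiagonal α, d p ^ 2 := by
      have h0 : qpow q (-l) α / factA α * ‖wick φ ψ α‖ ^ 2 =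
          (Real.sqrt (qpow q (-l) α / factA α) * ‖wick φ ψ α‖) ^ 2 := by
        rw [mul_pow, Real.sq_sqrt hX]
      rw [h0]
      calc (Real.sqrt (qpow q (-l) α / factA α) * ‖wick φ ψ α‖) ^ 2
          ≤ (∑ p ∈ Finset.HasAntidiagonal.antidiagonal α, c p * d p) ^ 2 :=
            pow_le_pow_left₀ (mul_nonneg (Real.sqrt_nonneg _) (norm_nonneg _)) hwick 2
        _ ≤ _ := Finset.sum_mul_sq_le_sq_mul_sq _ _ _
    calc ENNReal.ofReal (qpow q (-l) α / factA α * ‖wick φ ψ α‖ ^ 2)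
        ≤ ENNReal.ofReal ((∑ p ∈ Finset.HasAntidiagonal.antidiagonal α, c p ^ 2) *
            ∑ p ∈ Finset.HasAntidiagonal.antidiagonal α, d p ^ 2) := ENNReal.ofReal_le_ofReal hsq
      _ = ENNReal.ofReal (∑ p ∈ Finset.HasAntidiagonal.antidiagonal α, c p ^ 2) *
            ENNReal.ofReal (∑ p ∈ Finset.HasAntidiagonal.antidiagonal α, d p ^ 2) := by
          rw [ENNReal.ofReal_mul (Finset.sum_nonneg fun p _ => sq_nonneg _)]
      _ ≤ S * ∑ p ∈ Finset.HasAntidiagonal.antidiagonal α, F p.1 * G p.2 := by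
          gcongr
          · rw [ENNReal.ofReal_sum_of_nonneg fun p _ => sq_nonneg _]
            have hcsq : ∀ p ∈ Finset.HasAntidiagonal.antidiagonal α,
                ENNReal.ofReal (c p ^ 2) =
                  ENNReal.ofReal (qpow q (-(l - l₁)) p.1) := fun p _ => by
              rw [hc]; simp only
              rw [Real.sq_sqrt (qpow_pos hq _ _).le]
            rw [Finset.sum_congr rfl hcsq]
            have himg : ∑ β ∈ (Finset.HasAntidiagonal.antidiagonal α).image Prod.fst,
                ENNReal.ofReal (qpow q (-(l - l₁)) β) =
                ∑ p ∈ Finset.HasAntidiagonal.antidiagonal α, ENNReal.ofReal (qpow q (-(l - l₁)) p.1) := by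
              refine Finset.sum_image fun p hp p' hp' h => ?_
              have h1 := Finset.HasAntidiagonal.mem_antidiagonal.mp hp
              have h2 := Finset.HasAntidiagonal.mem_antidiagonal.mp hp'
              refine Prod.ext h ?_
              have h3 := h1.trans h2.symm
              rw [h] at h3
              exact add_left_cancel h3
            rw [← himg, hSdef]
            exact ENNReal.sum_le_tsum _
          · rw [ENNReal.ofReal_sum_of_nonneg fun p _ => sq_nonneg _]
            refine le_of_eq (Finset.sum_congr rfl fun p _ => ?_)
            have hf1 := factA_pos p.1
            have hf2 := factA_pos p.2
            have hq2 := qpow_pos hq (-l₁) p.1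
            have hq3 := qpow_pos hq (-l) p.2
            have h1 : d p ^ 2 =
                (qpow q (-l₁) p.1 / factA p.1 * ‖φ p.1‖ ^ 2) *
                  (qpow q (-l) p.2 / factA p.2 * ‖ψ p.2‖ ^ 2) := by
              rw [hd]; simp only
              rw [mul_pow, mul_pow, mul_pow,
                Real.sq_sqrt (div_nonneg hq2.le hf1.le),
                Real.sq_sqrt (div_nonneg hq3.le hf2.le)]
            rw [h1, ENNReal.ofReal_mul
              (mul_nonneg (div_nonneg hq2.le hf1.le) (sq_nonneg _))]
  -- Step 2: sum over α
  have hsum : Knorm q l (wick φ ψ) ≤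
      S * ∑' α : ℤ →₀ ℕ, ∑ p ∈ Finset.HasAntidiagonal.antidiagonal α, F p.1 * G p.2 := by
    rw [Knorm, ← ENNReal.tsum_mul_left]
    exact ENNReal.tsum_le_tsum key
  -- Step 3: Cauchy product identity in ℝ≥0∞
  have hcauchy : (∑' α : ℤ →₀ ℕ, ∑ p ∈ Finset.HasAntidiagonal.antidiagonal α, F p.1 * G p.2) =
      (∑' α : ℤ →₀ ℕ, F α) * ∑' α : ℤ →₀ ℕ, G α := by
    rw [← ENNReal.tsum_mul_right]
    simp_rw [← ENNReal.tsum_mul_left]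
    rw [← ENNReal.tsum_prod,
      ← Finset.HasAntidiagonal.sigmaAntidiagonalEquivProd.tsum_eq
        (fun p : (ℤ →₀ ℕ) × (ℤ →₀ ℕ) => F p.1 * G p.2),
      ENNReal.tsum_sigma']
    refine tsum_congr fun α => ?_
    rw [← Finset.tsum_subtype (Finset.HasAntidiagonal.antidiagonal α) fun p => F p.1 * G p.2]
    rfl
  calc Knorm q l (wick φ ψ) ≤ S * ((∑' α : ℤ →₀ ℕ, F α) * ∑' α : ℤ →₀ ℕ, G α) := by
        rw [← hcauchy]; exact hsum
    _ = S * Knorm q l₁ φ * Knorm q l ψ := by rw [mul_assoc]; rfl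
end
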